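/- (Gottschalk–Hedlund theorem, Browder–Lin–Sine form) Let X be a topological space and F : X → X continuous such that the dynamical system (X, F) is minimal, i.e. every orbit {F^n x : n ∈ ℕ} is dense in X. Let γ : X → ℝ be continuous and bounded, with s_n(x) = ∑_{k=0}^{n} γ(F^k x). Then the cohomological equation φ(F x) − φ(x) = γ(x) has a continuous bounded solution φ if and only if the sums s_n are uniformly bounded, sup_{n,x} |s_n(x)| < ∞; under this condition the function φ(x) = sup_n (−s_n(x)) is a continuous bounded solution. -/

import Mathlib

open Filter Topology Set

set_option linter.unusedSectionVars false

namespace GHaux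

variable {X : Type*} [TopologicalSpace X]

/-- partial Birkhoff sums `s_n(x) = ∑_{k=0}^n γ(F^k x)` -/
def ps (F : X → X) (γ : X → ℝ) (n : ℕ) (x : X) : ℝ :=
  ∑ k ∈ Finset.range (n + 1), γ (F^[k] x)

/-- levels `L_n(x) = ∑_{k<n} γ(F^k x)` -/
def lv (F : X → X) (γ : X → ℝ) (n : ℕ) (x : X) : ℝ :=
  ∑ k ∈ Finset.range n, γ (F^[k] x)

/-- embedding of `X` into the sequence space -/
def emb (F : X → X) (γ : X → ℝ) (x : X) : ℕ → ℝ := fun n => ps F γ n x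

/-- shift on the sequence space -/
def sh : (ℕ → ℝ) → (ℕ → ℝ) := fun t n => t (n + 1) - t 0

/-- skew product -/
def tau : (ℕ → ℝ) × ℝ → (ℕ → ℝ) × ℝ := fun p => (sh p.1, p.2 + p.1 0)

/-- tail of the skew-product orbit of `(emb x, 0)` -/
def orb (F : X → X) (γ : X → ℝ) (x : X) (N : ℕ) : Set ((ℕ → ℝ) × ℝ) :=
  (fun n => tau^[n] (emb F γ x, 0)) '' Set.Ici N

/-- the ω-limit set of the skew-product orbit of `(emb x, 0)` -/
def W (F : X → X) (γ : X → ℝ) (x : X) : Set ((ℕ → ℝ) × ℝ) :=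
  ⋂ N, closure (orb F γ x N)

variable {F : X → X} {γ : X → ℝ}

lemma ps_zero (x : X) : ps F γ 0 x = γ x := by
  simp [ps]

lemma ps_succ_left (n : ℕ) (x : X) : ps F γ (n + 1) x = ps F γ n (F x) + γ x := by
  simp only [ps]
  rw [Finset.sum_range_succ']
  simp [Function.iterate_succ_apply]

lemma lv_succ (n : ℕ) (x : X) : lv F γ (n + 1) x = lv F γ n x + γ (F^[n] x) :=
  Finset.sum_range_succ _ _

lemma lv_eq_ps (n : ℕ) (x : X) : lv F γ (n + 1) x = ps F γ n x := rfl

lemma emb_zero (x : X) : emb F γ x 0 = γ x := ps_zero x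

lemma sh_emb (x : X) : sh (emb F γ x) = emb F γ (F x) := by
  funext n
  simp only [sh, emb, ps_succ_left, ps_zero]
  ring

lemma tau_iter (n : ℕ) (x : X) (u : ℝ) :
    tau^[n] (emb F γ x, u) = (emb F γ (F^[n] x), u + lv F γ n x) := by
  induction n with
  | zero => simp [lv]
  | succ n ih =>
    rw [Function.iterate_succ_apply', ih]
    simp only [tau, sh_emb, emb_zero, lv_succ]
    rw [← Function.iterate_succ_apply' F n x]
    exact Prod.ext rfl (by ring)

lemma ps_cont (hFc : Continuous F) (hγc : Continuous γ) (n : ℕ) :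
    Continuous (ps F γ n) :=
  continuous_finset_sum _ fun k _ => hγc.comp (hFc.iterate k)

lemma emb_cont (hFc : Continuous F) (hγc : Continuous γ) :
    Continuous (emb F γ) :=
  continuous_pi fun n => ps_cont hFc hγc n

lemma sh_cont : Continuous sh :=
  continuous_pi fun n => (continuous_apply (n + 1)).sub (continuous_apply 0)

lemma tau_cont : Continuous tau :=
  (sh_cont.comp continuous_fst).prodMk
    (continuous_snd.add ((continuous_apply 0).comp continuous_fst))


section Bounded

variable {C : ℝ}

/-- the ambient compact set -/
def Sbig (C : ℝ) : Set ((ℕ → ℝ) × ℝ) :=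
  {p | (∀ n, p.1 n ∈ Set.Icc (-C) C) ∧ p.2 ∈ Set.Icc (-C) C}

lemma Sbig_eq (C : ℝ) :
    Sbig C = (Set.univ.pi fun _ : ℕ => Set.Icc (-C) C) ×ˢ Set.Icc (-C) C := by
  ext p
  simp only [Sbig, Set.mem_setOf_eq, Set.mem_prod, Set.mem_pi, Set.mem_univ, true_implies]

lemma Sbig_compact (C : ℝ) : IsCompact (Sbig C) := by
  rw [Sbig_eq]
  exact (isCompact_univ_pi fun _ => isCompact_Icc).prod isCompact_Icc

lemma Sbig_closed (C : ℝ) : IsClosed (Sbig C) := (Sbig_compact C).isClosed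

variable (HC : ∀ (n : ℕ) (x : X), |ps F γ n x| ≤ C) (hC0 : 0 ≤ C)
include HC hC0

lemma lv_bound (n : ℕ) (x : X) : |lv F γ n x| ≤ C := by
  cases n with
  | zero => simpa [lv] using hC0
  | succ n => rw [lv_eq_ps]; exact HC n x

lemma orb_subset_S (x : X) (N : ℕ) : orb F γ x N ⊆ Sbig C := by
  rintro p ⟨n, -, rfl⟩
  show tau^[n] (emb F γ x, 0) ∈ Sbig C
  rw [tau_iter]
  constructor
  · intro m
    exact abs_le.1 (HC m (F^[n] x))
  · simpa using abs_le.1 (lv_bound HC hC0 n x)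

lemma cl_orb_compact (x : X) (N : ℕ) : IsCompact (closure (orb F γ x N)) :=
  (Sbig_compact C).of_isClosed_subset isClosed_closure
    (closure_minimal (orb_subset_S HC hC0 x N) (Sbig_closed C))

lemma W_subset_S (x : X) : W F γ x ⊆ Sbig C :=
  (Set.iInter_subset _ 0).trans
    (closure_minimal (orb_subset_S HC hC0 x 0) (Sbig_closed C))

omit HC hC0

lemma W_closed (x : X) : IsClosed (W F γ x) :=
  isClosed_iInter fun _ => isClosed_closure

include HC hC0

lemma W_compact (x : X) : IsCompact (W F γ x) :=
  (cl_orb_compact HC hC0 x 0).of_isClosed_subset (W_closed x) (Set.iInter_subset _ 0)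

omit HC hC0

lemma orb_anti (x : X) (N : ℕ) : orb F γ x (N + 1) ⊆ orb F γ x N :=
  Set.image_mono (Set.Ici_subset_Ici.2 (Nat.le_succ N))

include HC hC0

lemma W_nonempty (x : X) : (W F γ x).Nonempty := by
  apply IsCompact.nonempty_iInter_of_sequence_nonempty_isCompact_isClosed
  · exact fun N => closure_mono (orb_anti x N)
  · exact fun N => ⟨tau^[N] (emb F γ x, 0), subset_closure ⟨N, le_refl N, rfl⟩⟩
  · exact cl_orb_compact HC hC0 x 0
  · exact fun N => isClosed_closure

omit HC hC0

lemma W_inv {x : X} {p : (ℕ → ℝ) × ℝ} (hp : p ∈ W F γ x) : tau p ∈ W F γ x := by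
  rw [W, Set.mem_iInter] at hp ⊢
  intro N
  have h1 : tau p ∈ tau '' closure (orb F γ x N) := Set.mem_image_of_mem _ (hp N)
  have h2 : tau '' closure (orb F γ x N) ⊆ closure (tau '' orb F γ x N) :=
    image_closure_subset_closure_image tau_cont
  refine closure_mono ?_ (h2 h1)
  rintro q ⟨r, ⟨n, hn, rfl⟩, rfl⟩
  exact ⟨n + 1, le_trans hn (Nat.le_succ n), by
    simpa using Function.iterate_succ_apply' tau n (emb F γ x, 0)⟩

lemma W_iter_inv {x : X} {p : (ℕ → ℝ) × ℝ} (hp : p ∈ W F γ x) (n : ℕ) :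
    tau^[n] p ∈ W F γ x := by
  induction n with
  | zero => exact hp
  | succ n ih => rw [Function.iterate_succ_apply']; exact W_inv ih

/-- transfer of ω-limit sets: if the fiber of `W x` over `emb y` contains `u`,
then `W y` translated by `u` is contained in `W x`. -/
lemma W_translate {x y : X} {u : ℝ} (hu : (emb F γ y, u) ∈ W F γ x)
    {p : (ℕ → ℝ) × ℝ} (hp : p ∈ W F γ y) : (p.1, p.2 + u) ∈ W F γ x := by
  have horb : ∀ n : ℕ, tau^[n] (emb F γ y, u) ∈ W F γ x := W_iter_inv hu
  have him : (fun q : (ℕ → ℝ) × ℝ => (q.1, q.2 + u)) '' orb F γ y 0 ⊆ W F γ x := by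
    rintro q ⟨r, ⟨n, -, rfl⟩, rfl⟩
    have : (fun q : (ℕ → ℝ) × ℝ => (q.1, q.2 + u)) (tau^[n] (emb F γ y, 0))
        = tau^[n] (emb F γ y, u) := by
      rw [tau_iter, tau_iter]
      exact Prod.ext rfl (by ring)
    rw [this]
    exact horb n
  have hpc : p ∈ closure (orb F γ y 0) := Set.mem_iInter.1 hp 0
  have hcont : Continuous (fun q : (ℕ → ℝ) × ℝ => (q.1, q.2 + u)) :=
    continuous_fst.prodMk (continuous_snd.add continuous_const)
  have h1 : (p.1, p.2 + u) ∈ closure ((fun q : (ℕ → ℝ) × ℝ => (q.1, q.2 + u)) '' orb F γ y 0) :=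
    image_closure_subset_closure_image hcont (Set.mem_image_of_mem _ hpc)
  have h2 := closure_mono him h1
  rwa [IsClosed.closure_eq (W_closed (F := F) (γ := γ) x)] at h2


include HC hC0

/-- the fiber of `W x` over `emb x` itself only contains `0`. -/
lemma W_self_fiber_zero {x : X} {v : ℝ} (hv : (emb F γ x, v) ∈ W F γ x) : v = 0 := by
  by_contra hne
  have hstep : ∀ p ∈ W F γ x, ((p : (ℕ → ℝ) × ℝ).1, p.2 + v) ∈ W F γ x :=
    fun p hp => W_translate hv hp
  have hk : ∀ k : ℕ, (emb F γ x, v + k * v) ∈ W F γ x := by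
    intro k
    induction k with
    | zero => simpa using hv
    | succ k ih =>
      have := hstep _ ih
      have he : v + (k : ℝ) * v + v = v + ((k : ℝ) + 1) * v := by ring
      simpa [he, Nat.cast_succ] using this
  obtain ⟨k, hkgt⟩ := exists_nat_gt (C / |v|)
  have hvpos : 0 < |v| := abs_pos.2 hne
  have hCk : C < (k : ℝ) * |v| := (div_lt_iff₀ hvpos).1 hkgt
  have hmem := (W_subset_S HC hC0 x (hk k)).2
  have habs : |v + (k : ℝ) * v| ≤ C := abs_le.2 hmem
  have : |v + (k : ℝ) * v| = (1 + (k : ℝ)) * |v| := by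
    rw [show v + (k : ℝ) * v = (1 + (k : ℝ)) * v by ring, abs_mul,
      abs_of_nonneg (by positivity : (0 : ℝ) ≤ 1 + (k : ℝ))]
  nlinarith [abs_nonneg v]

/-- every fiber of `W x` over an embedded point is nonempty. -/
lemma mem_W_pair (hFc : Continuous F) (hγc : Continuous γ)
    (hmin : ∀ x : X, Dense (Set.range fun n : ℕ => F^[n] x)) (x y : X) :
    ∃ u : ℝ, (emb F γ y, u) ∈ W F γ x := by
  set Zt : ℕ → Set ((ℕ → ℝ) × ℝ) :=
    fun N => closure (orb F γ x N) ∩ {p | p.1 = emb F γ y} with hZt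
  have hZcl : ∀ N, IsClosed (Zt N) :=
    fun N => isClosed_closure.inter (isClosed_eq continuous_fst continuous_const)
  have hZne : ∀ N, (Zt N).Nonempty := by
    intro N
    have hd : Dense {z : X | ∃ n ≥ N, z = F^[n] x} := by
      apply Dense.mono _ (hmin (F^[N] x))
      rintro z ⟨n, rfl⟩
      exact ⟨n + N, Nat.le_add_left N n, (Function.iterate_add_apply F n N x).symm⟩
    have he : emb F γ y ∈ closure (Prod.fst '' orb F γ x N) := by
      have h1 : emb F γ y ∈ closure (emb F γ '' {z : X | ∃ n ≥ N, z = F^[n] x}) :=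
        mem_closure_image (emb_cont hFc hγc).continuousAt (hd y)
      refine closure_mono ?_ h1
      rintro t ⟨z, ⟨n, hn, rfl⟩, rfl⟩
      exact ⟨tau^[n] (emb F γ x, 0), ⟨n, hn, rfl⟩, by rw [tau_iter]⟩
    have hcl : IsClosed (Prod.fst '' closure (orb F γ x N)) :=
      ((cl_orb_compact HC hC0 x N).image continuous_fst).isClosed
    have h2 : closure (Prod.fst '' orb F γ x N) ⊆ Prod.fst '' closure (orb F γ x N) :=
      closure_minimal (Set.image_mono subset_closure) hcl
    obtain ⟨p, hp, hpe⟩ := h2 he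
    exact ⟨p, hp, hpe⟩
  have hZanti : ∀ N, Zt (N + 1) ⊆ Zt N :=
    fun N => Set.inter_subset_inter_left _ (closure_mono (orb_anti x N))
  have hZ0 : IsCompact (Zt 0) :=
    (cl_orb_compact HC hC0 x 0).inter_right (isClosed_eq continuous_fst continuous_const)
  obtain ⟨q, hq⟩ := IsCompact.nonempty_iInter_of_sequence_nonempty_isCompact_isClosed
    Zt hZanti hZne hZ0 hZcl
  rw [Set.mem_iInter] at hq
  refine ⟨q.2, ?_⟩
  have hq1 : q.1 = emb F γ y := (hq 0).2
  have : (emb F γ y, q.2) = q := by rw [← hq1]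
  rw [this, W, Set.mem_iInter]
  exact fun N => (hq N).1

/-- fibers of `W x` over embedded points are singletons. -/
lemma W_fiber_unique (hFc : Continuous F) (hγc : Continuous γ)
    (hmin : ∀ x : X, Dense (Set.range fun n : ℕ => F^[n] x)) {x y : X} {u u' : ℝ}
    (hu : (emb F γ y, u) ∈ W F γ x) (hu' : (emb F γ y, u') ∈ W F γ x) : u = u' := by
  obtain ⟨w, hw⟩ := mem_W_pair HC hC0 hFc hγc hmin y x
  have h1 : (emb F γ x, w + u) ∈ W F γ x := W_translate hu hw
  have h2 : (emb F γ x, w + u') ∈ W F γ x := W_translate hu' hw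
  have := W_self_fiber_zero HC hC0 h1
  have := W_self_fiber_zero HC hC0 h2
  linarith

/-- Browder's noncompact Gottschalk–Hedlund theorem: existence of a continuous
bounded transfer function. -/
lemma exists_solution [Nonempty X] (hFc : Continuous F) (hγc : Continuous γ)
    (hmin : ∀ x : X, Dense (Set.range fun n : ℕ => F^[n] x)) :
    ∃ φ : X → ℝ, Continuous φ ∧ (∀ x, |φ x| ≤ C) ∧ ∀ x, φ (F x) - φ x = γ x := by
  classical
  set xb : X := Classical.arbitrary X with hxb
  have hch : ∀ y : X, ∃ u : ℝ, (emb F γ y, u) ∈ W F γ xb :=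
    fun y => mem_W_pair HC hC0 hFc hγc hmin xb y
  choose φ hφ using hch
  have heq : ∀ y, φ (F y) - φ y = γ y := by
    intro y
    have h1 : tau (emb F γ y, φ y) ∈ W F γ xb := W_inv (hφ y)
    have h2 : tau (emb F γ y, φ y) = (emb F γ (F y), φ y + γ y) := by
      simp only [tau, sh_emb, emb_zero]
    rw [h2] at h1
    have := W_fiber_unique HC hC0 hFc hγc hmin (hφ (F y)) h1
    linarith
  have hbd : ∀ y, |φ y| ≤ C := by
    intro y
    exact abs_le.2 (W_subset_S HC hC0 xb (hφ y)).2
  refine ⟨φ, ?_, hbd, heq⟩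
  rw [continuous_iff_continuousAt]
  intro y₀
  have hΨ : ContinuousAt (fun y => ((emb F γ y : ℕ → ℝ), φ y)) y₀ := by
    rw [ContinuousAt, tendsto_nhds]
    intro U hUo hUm
    by_contra hpre
    set l := Filter.map (fun y => ((emb F γ y : ℕ → ℝ), φ y)) (𝓝 y₀) ⊓ 𝓟 Uᶜ with hl
    have hne : l.NeBot := by
      rw [neBot_iff]
      intro hbot
      rw [hl, inf_principal_eq_bot, compl_compl] at hbot
      exact hpre hbot
    have hle : l ≤ 𝓟 (W F γ xb) := by
      refine le_trans inf_le_left ?_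
      rw [le_principal_iff, Filter.mem_map]
      exact Filter.univ_mem' fun y => hφ y
    obtain ⟨q, hqW, hqcl⟩ := W_compact HC hC0 xb hle
    have hqU : q ∈ Uᶜ := by
      have h1 : ClusterPt q (𝓟 Uᶜ) := hqcl.mono inf_le_right
      have h2 : q ∈ closure Uᶜ := mem_closure_iff_clusterPt.mpr h1
      rwa [IsClosed.closure_eq (isClosed_compl_iff.mpr hUo)] at h2
    have hq1 : q.1 = emb F γ y₀ := by
      have hcl1 : ClusterPt q.1 (Filter.map (fun y => emb F γ y) (𝓝 y₀)) := by
        have h3 := (hqcl.mono inf_le_left).map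
          (continuous_fst.continuousAt : ContinuousAt Prod.fst q)
          (Filter.tendsto_map (f := Prod.fst))
        rwa [Filter.map_map] at h3
      have hten : Filter.map (fun y => emb F γ y) (𝓝 y₀) ≤ 𝓝 (emb F γ y₀) :=
        (emb_cont hFc hγc).continuousAt
      exact eq_of_nhds_neBot (hcl1.mono hten)
    have hq2 : q.2 = φ y₀ := by
      have hmem : (emb F γ y₀, q.2) ∈ W F γ xb := by
        rw [← hq1]
        simpa using hqW
      exact W_fiber_unique HC hC0 hFc hγc hmin hmem (hφ y₀)
    apply hqU
    have : q = (emb F γ y₀, φ y₀) := by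
      rw [← hq1, ← hq2]
    rw [this]
    exact hUm
  have h4 : Filter.Tendsto (fun p : (ℕ → ℝ) × ℝ => p.2)
      (𝓝 ((emb F γ y₀ : ℕ → ℝ), φ y₀)) (𝓝 (φ y₀)) := continuous_snd.tendsto _
  exact h4.comp hΨ

end Bounded

lemma tele {φ : X → ℝ} (heq : ∀ x, φ (F x) - φ x = γ x) (n : ℕ) (x : X) :
    ∑ k ∈ Finset.range (n + 1), γ (F^[k] x) = φ (F^[n + 1] x) - φ x := by
  induction n with
  | zero =>
    simp only [Nat.zero_add, Finset.sum_range_one, Function.iterate_zero_apply,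
      Function.iterate_one]
    exact (heq x).symm
  | succ n ih =>
    rw [Finset.sum_range_succ, ih]
    have h1 := heq (F^[n + 1] x)
    rw [← Function.iterate_succ_apply' F (n + 1) x] at h1
    linarith

/-- the main nontrivial implication, with the explicit `sup` formula. -/
lemma main_part2 [Nonempty X] (hFc : Continuous F) (hγc : Continuous γ)
    (hmin : ∀ x : X, Dense (Set.range fun n : ℕ => F^[n] x))
    (h : ∃ C : ℝ, ∀ (n : ℕ) (x : X), |∑ k ∈ Finset.range (n + 1), γ (F^[k] x)| ≤ C) :
    (Continuous fun x : X => ⨆ n : ℕ, -(∑ k ∈ Finset.range (n + 1), γ (F^[k] x))) ∧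
      (∃ C : ℝ, ∀ x : X,
        |⨆ n : ℕ, -(∑ k ∈ Finset.range (n + 1), γ (F^[k] x))| ≤ C) ∧
      ∀ x : X,
        (⨆ n : ℕ, -(∑ k ∈ Finset.range (n + 1), γ (F^[k] (F x)))) -
        (⨆ n : ℕ, -(∑ k ∈ Finset.range (n + 1), γ (F^[k] x))) = γ x := by
  classical
  obtain ⟨C, HC⟩ := h
  have HC' : ∀ (n : ℕ) (x : X), |ps F γ n x| ≤ C := HC
  have hC0 : 0 ≤ C := le_trans (abs_nonneg _) (HC' 0 (Classical.arbitrary X))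
  obtain ⟨φ, hφc, hφb, heq⟩ := exists_solution HC' hC0 hFc hγc hmin
  set I : ℝ := sInf (Set.range φ) with hI
  have hrne : (Set.range φ).Nonempty := ⟨φ (Classical.arbitrary X), Set.mem_range_self _⟩
  have hbdd : BddBelow (Set.range φ) := by
    refine ⟨-C, ?_⟩
    rintro _ ⟨y, rfl⟩
    linarith [(abs_le.1 (hφb y)).1]
  have hIle : ∀ y, I ≤ φ y := fun y => csInf_le hbdd (Set.mem_range_self y)
  have hIlb : -C ≤ I := le_csInf hrne (by rintro _ ⟨y, rfl⟩; linarith [(abs_le.1 (hφb y)).1])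
  have hIub : I ≤ C := le_trans (hIle (Classical.arbitrary X))
    (abs_le.1 (hφb (Classical.arbitrary X))).2
  have hM : ∀ x : X,
      (⨆ n : ℕ, -(∑ k ∈ Finset.range (n + 1), γ (F^[k] x))) = φ x - I := by
    intro x
    have htel : ∀ n : ℕ, -(∑ k ∈ Finset.range (n + 1), γ (F^[k] x))
        = φ x - φ (F^[n + 1] x) := fun n => by rw [tele heq n x]; ring
    have hbddA : BddAbove (Set.range fun n : ℕ =>
        -(∑ k ∈ Finset.range (n + 1), γ (F^[k] x))) := by
      refine ⟨C + C, ?_⟩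
      rintro _ ⟨n, rfl⟩
      show -(∑ k ∈ Finset.range (n + 1), γ (F^[k] x)) ≤ C + C
      rw [htel n]
      have h1 := abs_le.1 (hφb x)
      have h2 := abs_le.1 (hφb (F^[n + 1] x))
      linarith
    apply le_antisymm
    · apply ciSup_le
      intro n
      rw [htel n]
      linarith [hIle (F^[n + 1] x)]
    · by_contra hlt
      push_neg at hlt
      set S : ℝ := ⨆ n : ℕ, -(∑ k ∈ Finset.range (n + 1), γ (F^[k] x)) with hS
      set ε : ℝ := φ x - I - S with hε
      have hεpos : 0 < ε := by rw [hε]; linarith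
      obtain ⟨a, ⟨y, rfl⟩, hay⟩ := exists_lt_of_csInf_lt hrne
        (show I < I + ε by linarith)
      have hUo : IsOpen (φ ⁻¹' Set.Iio (I + ε)) := isOpen_Iio.preimage hφc
      obtain ⟨z, ⟨n, rfl⟩, hzU⟩ := (hmin (F x)).exists_mem_open hUo ⟨y, hay⟩
      have h1 : φ (F^[n + 1] x) < I + ε := by
        rw [Function.iterate_succ_apply]
        exact hzU
      have h2 : φ x - φ (F^[n + 1] x) ≤ S := by
        rw [← htel n]
        exact le_ciSup hbddA n
      have hc : φ x - (I + ε) < S := by linarith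
      rw [hε] at hc
      linarith
  refine ⟨?_, ⟨C + C, fun x => ?_⟩, fun x => ?_⟩
  · have hfun : (fun x : X => ⨆ n : ℕ, -(∑ k ∈ Finset.range (n + 1), γ (F^[k] x)))
        = fun x => φ x - I := funext hM
    rw [hfun]
    exact hφc.sub continuous_const
  · rw [hM x]
    have h1 := abs_le.1 (hφb x)
    exact abs_le.2 ⟨by linarith, by linarith⟩
  · rw [hM (F x), hM x]
    linarith [heq x]

end GHaux

/-- Gottschalk–Hedlund, Browder–Lin–Sine form: for a minimal system
`(X, F)` and a continuous bounded `γ`, the cohomological equation has a continuous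
bounded solution iff the sums `s_n` are uniformly bounded, in which case
`φ(x) = sup_n (−s_n(x))` is such a solution. -/
theorem gottschalk_hedlund
    {X : Type*} [TopologicalSpace X] [Nonempty X]
    (F : X → X) (hFc : Continuous F)
    (hmin : ∀ x : X, Dense (Set.range fun n : ℕ => F^[n] x))
    (γ : X → ℝ) (hγc : Continuous γ) (hγb : ∃ C : ℝ, ∀ x, |γ x| ≤ C) :
    ((∃ φ : X → ℝ, Continuous φ ∧ (∃ C : ℝ, ∀ x, |φ x| ≤ C) ∧
        ∀ x, φ (F x) - φ x = γ x) ↔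
      ∃ C : ℝ, ∀ (n : ℕ) (x : X), |∑ k ∈ Finset.range (n + 1), γ (F^[k] x)| ≤ C) ∧
    ((∃ C : ℝ, ∀ (n : ℕ) (x : X), |∑ k ∈ Finset.range (n + 1), γ (F^[k] x)| ≤ C) →
      (Continuous fun x : X => ⨆ n : ℕ, -(∑ k ∈ Finset.range (n + 1), γ (F^[k] x))) ∧
      (∃ C : ℝ, ∀ x : X,
        |⨆ n : ℕ, -(∑ k ∈ Finset.range (n + 1), γ (F^[k] x))| ≤ C) ∧
      ∀ x : X,
        (⨆ n : ℕ, -(∑ k ∈ Finset.range (n + 1), γ (F^[k] (F x)))) -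
        (⨆ n : ℕ, -(∑ k ∈ Finset.range (n + 1), γ (F^[k] x))) = γ x) := by
  constructor
  · constructor
    · rintro ⟨φ, hφc, ⟨B, hB⟩, heq⟩
      refine ⟨B + B, fun n x => ?_⟩
      rw [GHaux.tele heq n x]
      have h1 := abs_le.1 (hB (F^[n + 1] x))
      have h2 := abs_le.1 (hB x)
      exact abs_le.2 ⟨by linarith, by linarith⟩
    · intro h
      obtain ⟨h1, h2, h3⟩ := GHaux.main_part2 hFc hγc hmin h
      exact ⟨_, h1, h2, fun x => h3 x⟩
  · exact GHaux.main_part2 hFc hγc hmin
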